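/- Let β̂: ℝ → [0,+∞] be convex, lower semicontinuous, with β̂(0)=0 and β̂(r)/r² → +∞ as |r| → +∞. For ε > 0, let β̂_ε denote the Moreau–Yosida regularization β̂_ε(r) := inf_{s ∈ ℝ} { |s−r|²/(2ε) + β̂(s) }. Then for every M > 0 there exist constants C_M > 0 and ε_M > 0 such that β̂_ε(r) ≥ M r² − C_M for every r ∈ ℝ and every ε ∈ (0, ε_M). -/

import Mathlib

open Filter MeasureTheory Topology
open scoped NNReal ENNReal

/-- Superquadratic growth of the Moreau–Yosida regularization for small `ε`. -/
theorem moreau_yosida_superquadratic_bound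
    (βhat : ℝ → ℝ≥0∞)
    (hconvex : ∀ x y : ℝ, ∀ a b : ℝ≥0, a + b = 1 →
      βhat ((a : ℝ) * x + (b : ℝ) * y) ≤ (a : ℝ≥0∞) * βhat x + (b : ℝ≥0∞) * βhat y)
    (hlsc : LowerSemicontinuous βhat)
    (hzero : βhat 0 = 0)
    (hgrowth : Tendsto (fun r : ℝ => βhat r / ENNReal.ofReal (r ^ 2))
      (Filter.cocompact ℝ) (𝓝 ⊤)) :
    ∀ M : ℝ, 0 < M → ∃ C : ℝ, 0 < C ∧ ∃ εM : ℝ, 0 < εM ∧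
      ∀ r : ℝ, ∀ ε : ℝ, 0 < ε → ε < εM →
        ENNReal.ofReal (M * r ^ 2 - C) ≤
          ⨅ s : ℝ, (ENNReal.ofReal (|s - r| ^ 2 / (2 * ε)) + βhat s) := by
  intro M hM
  have hev : ∀ᶠ s in cocompact ℝ,
      ENNReal.ofReal (2 * M) < βhat s / ENNReal.ofReal (s ^ 2) :=
    hgrowth.eventually (lt_mem_nhds (ENNReal.ofReal_lt_top))
  obtain ⟨K, hK, hKsub⟩ := Filter.hasBasis_cocompact.eventually_iff.mp hev
  obtain ⟨R, hR⟩ := hK.isBounded.subset_closedBall 0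
  set R' : ℝ := max R 0 with hR'def
  have hR'0 : 0 ≤ R' := le_max_right _ _
  refine ⟨2 * M * R' ^ 2 + 1, by positivity, 1 / (4 * M), by positivity, ?_⟩
  intro r ε hε hεM
  refine le_iInf fun s => ?_
  have key : ∀ x : ℝ, 2 * M * x ^ 2 ≤ |x| ^ 2 / (2 * ε) := by
    intro x
    rw [sq_abs, le_div_iff₀ (by positivity)]
    have h1 : ε * (4 * M) < 1 := (lt_div_iff₀ (by positivity)).mp hεM
    nlinarith [sq_nonneg x, mul_nonneg (sq_nonneg x) (mul_pos hε hM).le]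
  rcases le_or_gt |s| R' with hs | hs
  · calc ENNReal.ofReal (M * r ^ 2 - (2 * M * R' ^ 2 + 1))
        ≤ ENNReal.ofReal (|s - r| ^ 2 / (2 * ε)) := by
          apply ENNReal.ofReal_le_ofReal
          have h2 := key (s - r)
          have h3 : |s| ^ 2 ≤ R' ^ 2 := pow_le_pow_left₀ (abs_nonneg s) hs 2
          nlinarith [sq_abs s, sq_abs (s - r),
            mul_nonneg hM.le (sq_nonneg (2 * s - r))]
      _ ≤ _ := le_self_add
  · have hsK : s ∈ Kᶜ := by
      intro hsK
      have h1 := hR hsK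
      rw [Metric.mem_closedBall, Real.dist_eq, sub_zero] at h1
      have : R < |s| := lt_of_le_of_lt (le_max_left R 0) hs
      linarith
    have hlt := hKsub hsK
    have hs0 : s ≠ 0 := by
      intro h; rw [h, abs_zero] at hs; linarith
    have hne0 : ENNReal.ofReal (s ^ 2) ≠ 0 := by
      simp [ENNReal.ofReal_eq_zero, not_le, pow_pos, abs_pos]
      positivity
    have hb : ENNReal.ofReal (2 * M * s ^ 2) ≤ βhat s := by
      rw [ENNReal.ofReal_mul (by positivity)]
      exact (ENNReal.le_div_iff_mul_le (Or.inl hne0)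
        (Or.inl ENNReal.ofReal_ne_top)).mp hlt.le
    calc ENNReal.ofReal (M * r ^ 2 - (2 * M * R' ^ 2 + 1))
        ≤ ENNReal.ofReal (|s - r| ^ 2 / (2 * ε)) + ENNReal.ofReal (2 * M * s ^ 2) := by
          rw [← ENNReal.ofReal_add (by positivity) (by positivity)]
          apply ENNReal.ofReal_le_ofReal
          have h2 := key (s - r)
          nlinarith [sq_abs (s - r), mul_nonneg hM.le (sq_nonneg (2 * s - r)),
            mul_nonneg hM.le (sq_nonneg R')]
      _ ≤ _ := add_le_add_right hb _
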